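/- Let {f_n}_{n≥0} be a sequence of Puiseux polynomials with deg(f_i) > 0 for i ≥ 1 such that Σ_{n=1}^∞ deg(f_n) converges to a finite value. For each n let B_{ϖ_n} be the set of elements of Ĥ whose continued fraction begins with f₀, …, f_n. Then ⋂_{n=1}^∞ B_{ϖ_n} = ∅. -/

import Mathlib

universe u

/-- Evaluation of a finite continued fraction `[f₀, f₁, …, f_N]` in a field,
`cfEval [a] = a`, `cfEval (a :: l) = a + (cfEval l)⁻¹` (with the convention `0⁻¹ = 0`). -/
def cfEval {L : Type u} [Field L] : List L → L
  | [] => 0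
  | a :: l => a + (cfEval l)⁻¹

/-- The Moebius maps `ρ_n = σ_n ∘ ⋯ ∘ σ_0`, where `σ_i x = (x - f_i)⁻¹`. -/
def rho {L : Type u} [Field L] (f : ℕ → L) : ℕ → L → L
  | 0, x => (x - f 0)⁻¹
  | n + 1, x => (rho f n x - f (n + 1))⁻¹

/-- The derivative `ρ_n'` of `ρ_n`, computed by the chain rule from
`σ_i'(x) = -((x - f_i)⁻¹)²`. -/
def rho' {L : Type u} [Field L] (f : ℕ → L) : ℕ → L → L
  | 0, x => -((x - f 0)⁻¹) ^ 2
  | n + 1, x => -((rho f n x - f (n + 1))⁻¹) ^ 2 * rho' f n x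

/-- An abstract presentation of the completion `K̂` of the Puiseux field
`E⟨⟨t⁻¹⟩⟩` over a field `E`.  The field `K` carries an additive valuation
`ν` with values in `ℚ` on nonzero elements (normalized by `ν (t^r) = -r`,
where `mono r` plays the role of the monomial `t^r`), the subfield `E` is
embedded via `emb`, the simple "Laurent Puiseux polynomials" (the ring
generated by `E` and all rational powers of `t`) are dense, and `K` is
complete for `ν`. -/
structure PuiseuxCompletion (E : Type u) [Field E] where
  K : Type u
  [fieldK : Field K]
  ν : K → ℚ
  emb : E →+* K
  mono : ℚ → K
  mono_zero : mono 0 = 1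
  mono_mul : ∀ r s : ℚ, mono r * mono s = mono (r + s)
  ν_mono : ∀ r : ℚ, ν (mono r) = -r
  ν_emb : ∀ e : E, e ≠ 0 → ν (emb e) = 0
  ν_mul : ∀ x y : K, x ≠ 0 → y ≠ 0 → ν (x * y) = ν x + ν y
  ν_add : ∀ x y : K, x ≠ 0 → y ≠ 0 → x + y ≠ 0 → min (ν x) (ν y) ≤ ν (x + y)
  dense' : ∀ z : K, ∀ C : ℚ,
    ∃ f ∈ Subring.closure (Set.range emb ∪ Set.range mono), z = f ∨ C < ν (z - f)
  complete' : ∀ uSeq : ℕ → K,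
    (∀ C : ℚ, ∃ N : ℕ, ∀ m ≥ N, ∀ n ≥ N, uSeq m = uSeq n ∨ C < ν (uSeq m - uSeq n)) →
    ∃ z : K, ∀ C : ℚ, ∃ N : ℕ, ∀ n ≥ N, uSeq n = z ∨ C < ν (uSeq n - z)

attribute [instance] PuiseuxCompletion.fieldK

namespace PuiseuxCompletion

variable {E : Type u} [Field E] (P : PuiseuxCompletion E)

/-- The ring `Ā = E⟨t⟩` of Puiseux polynomials: finite `E`-linear combinations of
nonnegative rational powers of `t`. -/
def Abar : Subring P.K :=
  Subring.closure (Set.range P.emb ∪ P.mono '' {r : ℚ | 0 ≤ r})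

/-- `deg f = -ν f`. -/
def deg (f : P.K) : ℚ := -P.ν f

/-- The rational Puiseux field `k̃ = Quot(Ā) = ⋃ₙ E(t^{1/n})`, as a subfield of `K̂`. -/
def ktilde : Subfield P.K := Subfield.closure (P.Abar : Set P.K)

/-- `uSeq n → z` with respect to the valuation `ν`. -/
def TendsTo (uSeq : ℕ → P.K) (z : P.K) : Prop :=
  ∀ C : ℚ, ∃ N : ℕ, ∀ n ≥ N, uSeq n = z ∨ C < P.ν (uSeq n - z)

/-- One step of the continued fraction algorithm succeeds at index `i`:
`f i` is the Puiseux polynomial with `ν (z_i - f i) > 0`, the fraction does not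
end at `i` (`z_i ≠ f i`), and `z_{i+1} = (z_i - f i)⁻¹`. -/
def CFStep (f zs : ℕ → P.K) (i : ℕ) : Prop :=
  f i ∈ P.Abar ∧ 0 < P.ν (zs i - f i) ∧ zs i ≠ f i ∧ zs (i + 1) = (zs i - f i)⁻¹

/-- The `n`-th approximant `x_n = [f₀, …, f_n]_{ev}`. -/
def approx (f : ℕ → P.K) (n : ℕ) : P.K :=
  cfEval (List.ofFn fun i : Fin (n + 1) => f i)

/-- The continued fraction of `z` begins with the coefficients `f 0, …, f n`. -/
def CFBegins (f : ℕ → P.K) (n : ℕ) (z : P.K) : Prop :=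
  ∃ zs : ℕ → P.K, zs 0 = z ∧ (∀ i < n, P.CFStep f zs i) ∧
    f n ∈ P.Abar ∧ (zs n = f n ∨ 0 < P.ν (zs n - f n))

/-- `z` is the value of the continued fraction expression with coefficients `f`
and length `L` (finite or infinite); the coefficients are Puiseux polynomials of
positive degree after the zeroth one. -/
def CFExprEval (f : ℕ → P.K) (L : WithTop ℕ) (z : P.K) : Prop :=
  f 0 ∈ P.Abar ∧
  (∀ i : ℕ, 1 ≤ i → (i : WithTop ℕ) ≤ L → f i ∈ P.Abar ∧ 0 < P.deg (f i)) ∧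
  ((∃ N : ℕ, L = (N : WithTop ℕ) ∧ z = P.approx f N) ∨
    (L = ⊤ ∧ P.TendsTo (fun n => P.approx f n) z))

/-- The equivalence relation `(a, r) ~ (a', r')` iff `r = r'` and `ν (a - a') ≥ r`
(the pairs define the same Berkovich point `η_{a,r}` of type II or III). -/
def ballEquiv (p q : P.K × ℝ) : Prop :=
  p.2 = q.2 ∧ (p.1 = q.1 ∨ p.2 ≤ (P.ν (p.1 - q.1) : ℝ))

open scoped Classical in
/-- The Berkovich hyperbolic distance, computed on representatives. -/
noncomputable def berkDist (p q : P.K × ℝ) : ℝ :=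
  if p.1 = q.1 ∨ min p.2 q.2 ≤ (P.ν (p.1 - q.1) : ℝ) then |p.2 - q.2|
  else p.2 + q.2 - 2 * (P.ν (p.1 - q.1) : ℝ)

/-- The closed ball `B_a^{[r]} = {b : ν (b - a) ≥ r}` corresponding to `η_{a,r}`. -/
def closedBall (a : P.K) (r : ℝ) : Set P.K :=
  {b : P.K | b = a ∨ r ≤ (P.ν (b - a) : ℝ)}

/-- The Moebius transformation associated to a `2 × 2` matrix. -/
def mob (g : Matrix (Fin 2) (Fin 2) P.K) (x : P.K) : P.K :=
  (g 0 0 * x + g 0 1) / (g 1 0 * x + g 1 1)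

/-- The ring `A_M = E[t^{1/M}]`. -/
def AM (M : ℕ) : Subring P.K :=
  Subring.closure (Set.range P.emb ∪ {P.mono (1 / (M : ℚ))})

/-- The field `E(t^{1/M})`, whose `ν`-completion inside `K̂` is `K_M = E((t^{-1/M}))`. -/
def kM (M : ℕ) : Subfield P.K :=
  Subfield.closure (Set.range P.emb ∪ {P.mono (1 / (M : ℚ))})

/-! ### Auxiliary lemmas -/

section Aux


lemma mono_ne_zero (r : ℚ) : P.mono r ≠ 0 := by
  intro h
  have h1 : P.mono r * P.mono (-r) = 1 := by
    rw [P.mono_mul, add_neg_cancel, P.mono_zero]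
  rw [h, zero_mul] at h1
  exact zero_ne_one h1

lemma nu_one : P.ν 1 = 0 := by
  have := P.ν_mono 0
  rwa [P.mono_zero, neg_zero] at this

lemma nu_neg {x : P.K} (hx : x ≠ 0) : P.ν (-x) = P.ν x := by
  have hm : P.ν ((-1 : P.K) * -1) = P.ν (-1) + P.ν (-1) :=
    P.ν_mul _ _ (by norm_num) (by norm_num)
  rw [neg_mul_neg, one_mul, P.nu_one] at hm
  have h1 : P.ν (-1 : P.K) = 0 := by linarith
  have h2 := P.ν_mul (-1) x (by norm_num) hx
  rw [neg_one_mul, h1, zero_add] at h2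
  exact h2

lemma nu_inv {x : P.K} (hx : x ≠ 0) : P.ν x⁻¹ = -P.ν x := by
  have h := P.ν_mul x x⁻¹ hx (inv_ne_zero hx)
  rw [mul_inv_cancel₀ hx, P.nu_one] at h
  linarith

lemma nu_div {x y : P.K} (hx : x ≠ 0) (hy : y ≠ 0) :
    P.ν (x / y) = P.ν x - P.ν y := by
  rw [div_eq_mul_inv, P.ν_mul x y⁻¹ hx (inv_ne_zero hy), P.nu_inv hy]
  ring

lemma nu_add_sharp {x y : P.K} (hx : x ≠ 0) (hy : y ≠ 0) (h : P.ν x < P.ν y) :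
    x + y ≠ 0 ∧ P.ν (x + y) = P.ν x := by
  have hne : x + y ≠ 0 := by
    intro h0
    have hxy : x = -y := eq_neg_of_add_eq_zero_left h0
    rw [hxy, P.nu_neg hy] at h
    exact lt_irrefl _ h
  refine ⟨hne, le_antisymm ?_ ?_⟩
  · have h2 := P.ν_add (x + y) (-y) hne (neg_ne_zero.2 hy)
      (by rw [add_neg_cancel_right]; exact hx)
    rw [add_neg_cancel_right, P.nu_neg hy] at h2
    rcases le_total (P.ν (x + y)) (P.ν y) with hc | hc
    · calc P.ν (x + y) = min (P.ν (x + y)) (P.ν y) := (min_eq_left hc).symm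
        _ ≤ P.ν x := h2
    · have : min (P.ν (x + y)) (P.ν y) = P.ν y := min_eq_right hc
      rw [this] at h2
      linarith
  · have h3 := P.ν_add x y hx hy hne
    calc P.ν x = min (P.ν x) (P.ν y) := (min_eq_left h.le).symm
      _ ≤ P.ν (x + y) := h3

lemma mono_pow (r : ℚ) (n : ℕ) : P.mono r ^ n = P.mono (n * r) := by
  induction n with
  | zero => simp [P.mono_zero]
  | succ n ih =>
      rw [pow_succ, ih, P.mono_mul]
      congr 1
      push_cast
      ring

lemma nu_sum {ι : Type} {s : Finset ι} (hs : s.Nonempty) (x : ι → P.K)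
    (h0 : ∀ i ∈ s, x i ≠ 0)
    (hd : ∀ i ∈ s, ∀ j ∈ s, i ≠ j → P.ν (x i) ≠ P.ν (x j)) :
    (∑ i ∈ s, x i) ≠ 0 ∧
      ∃ i ∈ s, P.ν (∑ i ∈ s, x i) = P.ν (x i) ∧ ∀ j ∈ s, P.ν (x i) ≤ P.ν (x j) := by
  induction hs using Finset.Nonempty.cons_induction with
  | singleton a =>
      refine ⟨by simpa using h0 a (by simp), a, by simp, by simp, by simp⟩
  | cons a t ha ht ih =>
      have h0t : ∀ i ∈ t, x i ≠ 0 := fun i hi => h0 i (Finset.mem_cons_of_mem hi)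
      have hdt : ∀ i ∈ t, ∀ j ∈ t, i ≠ j → P.ν (x i) ≠ P.ν (x j) := fun i hi j hj =>
        hd i (Finset.mem_cons_of_mem hi) j (Finset.mem_cons_of_mem hj)
      obtain ⟨hne, i, hi, hν, hmin⟩ := ih h0t hdt
      have hxa : x a ≠ 0 := h0 a (Finset.mem_cons_self a t)
      have hane : P.ν (x a) ≠ P.ν (∑ i ∈ t, x i) := by
        rw [hν]
        exact hd a (Finset.mem_cons_self a t) i (Finset.mem_cons_of_mem hi)
          (fun h => ha (h ▸ hi))
      rw [Finset.sum_cons]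
      rcases lt_or_gt_of_ne hane with hlt | hgt
      · obtain ⟨hne', heq⟩ := P.nu_add_sharp hxa hne hlt
        refine ⟨hne', a, Finset.mem_cons_self a t, heq, ?_⟩
        intro j hj
        rcases Finset.mem_cons.1 hj with rfl | hj
        · exact le_refl _
        · exact le_trans (le_of_lt (lt_of_lt_of_le hlt (hν ▸ hmin j hj))) (le_refl _)
      · have hcomm : x a + ∑ i ∈ t, x i = ∑ i ∈ t, x i + x a := by ring
        obtain ⟨hne', heq⟩ := P.nu_add_sharp hne hxa hgt
        rw [hcomm]
        refine ⟨hne', i, Finset.mem_cons_of_mem hi, by rw [heq, hν], ?_⟩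
        intro j hj
        rcases Finset.mem_cons.1 hj with rfl | hj
        · exact le_of_lt (lt_of_le_of_lt (le_of_eq hν.symm) hgt)
        · exact hmin j hj

/-- Evaluation of polynomials at `t^{1/M}`. -/
noncomputable def ev (M : ℕ) : Polynomial E →+* P.K :=
  Polynomial.eval₂RingHom P.emb (P.mono (1 / (M : ℚ)))

lemma emb_ne_zero {e : E} (he : e ≠ 0) : P.emb e ≠ 0 := fun h =>
  he (P.emb.injective (by rw [h, map_zero]))

lemma nu_ev {M : ℕ} (hM : 0 < M) {p : Polynomial E} (hp : p ≠ 0) :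
    P.ev M p ≠ 0 ∧ P.ν (P.ev M p) = -((p.natDegree : ℚ) / M) := by
  have hMQ : (0 : ℚ) < (M : ℚ) := by exact_mod_cast hM
  have hrep : P.ev M p = ∑ j ∈ p.support, P.emb (p.coeff j) * P.mono ((j : ℚ) / M) := by
    rw [ev, Polynomial.coe_eval₂RingHom, Polynomial.eval₂_eq_sum, Polynomial.sum]
    refine Finset.sum_congr rfl fun j _ => ?_
    rw [P.mono_pow]
    congr 2
    field_simp
  have h0 : ∀ j ∈ p.support, P.emb (p.coeff j) * P.mono ((j : ℚ) / M) ≠ 0 := by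
    intro j hj
    exact mul_ne_zero (P.emb_ne_zero (Polynomial.mem_support_iff.1 hj)) (P.mono_ne_zero _)
  have hν : ∀ j ∈ p.support,
      P.ν (P.emb (p.coeff j) * P.mono ((j : ℚ) / M)) = -((j : ℚ) / M) := by
    intro j hj
    rw [P.ν_mul _ _ (P.emb_ne_zero (Polynomial.mem_support_iff.1 hj)) (P.mono_ne_zero _),
      P.ν_emb _ (Polynomial.mem_support_iff.1 hj), P.ν_mono, zero_add]
  have hd : ∀ i ∈ p.support, ∀ j ∈ p.support, i ≠ j →
      P.ν (P.emb (p.coeff i) * P.mono ((i : ℚ) / M)) ≠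
        P.ν (P.emb (p.coeff j) * P.mono ((j : ℚ) / M)) := by
    intro i hi j hj hij
    rw [hν i hi, hν j hj]
    intro h
    apply hij
    have h' : (i : ℚ) / M = (j : ℚ) / M := neg_injective h
    field_simp at h'
    exact_mod_cast h'
  obtain ⟨hne, i, hi, hval, hmin⟩ :=
    P.nu_sum (Polynomial.nonempty_support_iff.2 hp) _ h0 hd
  have hideg : i = p.natDegree := by
    refine le_antisymm (Polynomial.le_natDegree_of_mem_supp i hi) ?_
    have h1 := hmin p.natDegree (Polynomial.natDegree_mem_support_of_nonzero hp)
    rw [hν i hi, hν p.natDegree (Polynomial.natDegree_mem_support_of_nonzero hp)] at h1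
    have h2 : (p.natDegree : ℚ) / M ≤ (i : ℚ) / M := by linarith
    have h3 : (p.natDegree : ℚ) ≤ (i : ℚ) := by
      rwa [div_le_div_iff_of_pos_right hMQ] at h2
    exact_mod_cast h3
  rw [← hrep] at hne hval
  rw [hν i hi, hideg] at hval
  exact ⟨hne, hval⟩

lemma ev_mem_Abar {M : ℕ} (p : Polynomial E) : P.ev M p ∈ P.Abar := by
  have hMQ : (0 : ℚ) ≤ 1 / (M : ℚ) := by positivity
  induction p using Polynomial.induction_on with
  | C a =>
      rw [ev, Polynomial.coe_eval₂RingHom, Polynomial.eval₂_C]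
      exact Subring.subset_closure (Or.inl ⟨a, rfl⟩)
  | add p q hp hq => rw [map_add]; exact add_mem hp hq
  | monomial n a _ =>
      rw [map_mul, map_pow, ev, Polynomial.coe_eval₂RingHom, Polynomial.eval₂_C,
        Polynomial.eval₂_X]
      refine mul_mem (Subring.subset_closure (Or.inl ⟨a, rfl⟩)) (pow_mem ?_ _)
      exact Subring.subset_closure (Or.inr ⟨1 / (M : ℚ), hMQ, rfl⟩)

lemma ev_lift {M k : ℕ} (hM : 0 < M) (hk : 0 < k) (p : Polynomial E) :
    P.ev M p = P.ev (M * k) (p.comp (Polynomial.X ^ k)) := by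
  rw [ev, ev, Polynomial.coe_eval₂RingHom, Polynomial.coe_eval₂RingHom,
    Polynomial.eval₂_comp, Polynomial.eval₂_X_pow, P.mono_pow]
  congr 2
  have hMQ : ((M : ℚ)) ≠ 0 := by positivity
  have hkQ : ((k : ℚ)) ≠ 0 := by positivity
  push_cast
  field_simp

/-- `x` is a quotient of two polynomials in `t^{1/M}`. -/
def IsFrac (M : ℕ) (x : P.K) : Prop :=
  ∃ p q : Polynomial E, q ≠ 0 ∧ x = P.ev M p / P.ev M q

lemma isFrac_lift {M k : ℕ} (hM : 0 < M) (hk : 0 < k) {x : P.K} (h : P.IsFrac M x) :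
    P.IsFrac (M * k) x := by
  obtain ⟨p, q, hq, hx⟩ := h
  refine ⟨p.comp (Polynomial.X ^ k), q.comp (Polynomial.X ^ k), ?_, ?_⟩
  · intro h0
    apply (P.nu_ev hM hq).1
    rw [P.ev_lift hM hk, h0, map_zero]
  · rw [hx, P.ev_lift hM hk p, P.ev_lift hM hk q]

lemma isFrac_emb (e : E) : P.IsFrac 1 (P.emb e) :=
  ⟨Polynomial.C e, 1, one_ne_zero, by
    rw [map_one, ev, Polynomial.coe_eval₂RingHom, Polynomial.eval₂_C, div_one]⟩

lemma ev_X_pow (M : ℕ) (n : ℕ) : P.ev M (Polynomial.X ^ n) = P.mono ((n : ℚ) / M) := by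
  rw [ev, Polynomial.coe_eval₂RingHom, Polynomial.eval₂_X_pow, P.mono_pow, mul_one_div]

lemma isFrac_mono (r : ℚ) : P.IsFrac r.den (P.mono r) := by
  rcases le_or_gt 0 r.num with hn | hn
  · refine ⟨Polynomial.X ^ r.num.toNat, 1, one_ne_zero, ?_⟩
    rw [map_one, div_one, P.ev_X_pow]
    congr 1
    have h1 : ((r.num.toNat : ℚ)) = (r.num : ℚ) := by exact_mod_cast Int.toNat_of_nonneg hn
    rw [h1, Rat.num_div_den]
  · refine ⟨1, Polynomial.X ^ (-r.num).toNat, pow_ne_zero _ Polynomial.X_ne_zero, ?_⟩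
    rw [map_one, P.ev_X_pow]
    have h2 : (((-r.num).toNat : ℚ)) / r.den = -r := by
      have h3 : (((-r.num).toNat : ℚ)) = -(r.num : ℚ) := by
        exact_mod_cast Int.toNat_of_nonneg (by omega)
      rw [h3, neg_div, Rat.num_div_den]
    rw [h2]
    exact eq_one_div_of_mul_eq_one_left
      (by rw [P.mono_mul, add_neg_cancel, P.mono_zero])

lemma isFrac_add {M : ℕ} (hM : 0 < M) {x y : P.K} (hx : P.IsFrac M x) (hy : P.IsFrac M y) :
    P.IsFrac M (x + y) := by
  obtain ⟨p1, q1, hq1, rfl⟩ := hx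
  obtain ⟨p2, q2, hq2, rfl⟩ := hy
  refine ⟨p1 * q2 + p2 * q1, q1 * q2, mul_ne_zero hq1 hq2, ?_⟩
  have h1 := (P.nu_ev hM hq1).1
  have h2 := (P.nu_ev hM hq2).1
  rw [map_add, map_mul, map_mul, map_mul]
  field_simp

lemma isFrac_mul {M : ℕ} (_hM : 0 < M) {x y : P.K} (hx : P.IsFrac M x) (hy : P.IsFrac M y) :
    P.IsFrac M (x * y) := by
  obtain ⟨p1, q1, hq1, rfl⟩ := hx
  obtain ⟨p2, q2, hq2, rfl⟩ := hy
  refine ⟨p1 * p2, q1 * q2, mul_ne_zero hq1 hq2, ?_⟩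
  rw [map_mul, map_mul]
  rw [div_mul_div_comm]

lemma isFrac_neg {M : ℕ} {x : P.K} (hx : P.IsFrac M x) : P.IsFrac M (-x) := by
  obtain ⟨p1, q1, hq1, rfl⟩ := hx
  exact ⟨-p1, q1, hq1, by rw [map_neg, neg_div]⟩

lemma exists_isFrac_of_mem_closure {x : P.K}
    (hx : x ∈ Subring.closure (Set.range P.emb ∪ Set.range P.mono)) :
    ∃ M, 0 < M ∧ P.IsFrac M x := by
  induction hx using Subring.closure_induction with
  | mem y hy =>
      rcases hy with ⟨e, rfl⟩ | ⟨r, rfl⟩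
      · exact ⟨1, Nat.one_pos, P.isFrac_emb e⟩
      · exact ⟨r.den, r.den_pos, P.isFrac_mono r⟩
  | zero => exact ⟨1, Nat.one_pos, 0, 1, one_ne_zero, by rw [map_zero, map_one]; simp⟩
  | one => exact ⟨1, Nat.one_pos, 1, 1, one_ne_zero, by rw [map_one]; simp⟩
  | add x y hx' hy' ihx ihy =>
      obtain ⟨M1, hM1, h1⟩ := ihx
      obtain ⟨M2, hM2, h2⟩ := ihy
      refine ⟨M1 * M2, Nat.mul_pos hM1 hM2, P.isFrac_add (Nat.mul_pos hM1 hM2)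
        (P.isFrac_lift hM1 hM2 h1) ?_⟩
      rw [Nat.mul_comm M1 M2]
      exact P.isFrac_lift hM2 hM1 h2
  | neg x hx' ihx =>
      obtain ⟨M1, hM1, h1⟩ := ihx
      exact ⟨M1, hM1, P.isFrac_neg h1⟩
  | mul x y hx' hy' ihx ihy =>
      obtain ⟨M1, hM1, h1⟩ := ihx
      obtain ⟨M2, hM2, h2⟩ := ihy
      refine ⟨M1 * M2, Nat.mul_pos hM1 hM2, P.isFrac_mul (Nat.mul_pos hM1 hM2)
        (P.isFrac_lift hM1 hM2 h1) ?_⟩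
      rw [Nat.mul_comm M1 M2]
      exact P.isFrac_lift hM2 hM1 h2

lemma exists_ev_of_mem_Abar {x : P.K} (hx : x ∈ P.Abar) :
    ∃ M, 0 < M ∧ ∃ p : Polynomial E, x = P.ev M p := by
  induction hx using Subring.closure_induction with
  | mem y hy =>
      rcases hy with ⟨e, rfl⟩ | ⟨r, hr, rfl⟩
      · exact ⟨1, Nat.one_pos, Polynomial.C e,
          by rw [ev, Polynomial.coe_eval₂RingHom, Polynomial.eval₂_C]⟩
      · refine ⟨r.den, r.den_pos, Polynomial.X ^ r.num.toNat, ?_⟩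
        rw [P.ev_X_pow]
        congr 1
        have h1 : ((r.num.toNat : ℚ)) = (r.num : ℚ) := by
          exact_mod_cast Int.toNat_of_nonneg (Rat.num_nonneg.2 hr)
        rw [h1, Rat.num_div_den]
  | zero => exact ⟨1, Nat.one_pos, 0, by rw [map_zero]⟩
  | one => exact ⟨1, Nat.one_pos, 1, by rw [map_one]⟩
  | add x y hx' hy' ihx ihy =>
      obtain ⟨M1, hM1, p1, rfl⟩ := ihx
      obtain ⟨M2, hM2, p2, rfl⟩ := ihy
      refine ⟨M1 * M2, Nat.mul_pos hM1 hM2,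
        p1.comp (Polynomial.X ^ M2) + p2.comp (Polynomial.X ^ M1), ?_⟩
      rw [map_add, ← P.ev_lift hM1 hM2, ← Nat.mul_comm M2 M1, ← P.ev_lift hM2 hM1]
  | neg x hx' ihx =>
      obtain ⟨M1, hM1, p1, rfl⟩ := ihx
      exact ⟨M1, hM1, -p1, by rw [map_neg]⟩
  | mul x y hx' hy' ihx ihy =>
      obtain ⟨M1, hM1, p1, rfl⟩ := ihx
      obtain ⟨M2, hM2, p2, rfl⟩ := ihy
      refine ⟨M1 * M2, Nat.mul_pos hM1 hM2,
        p1.comp (Polynomial.X ^ M2) * p2.comp (Polynomial.X ^ M1), ?_⟩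
      rw [map_mul, ← P.ev_lift hM1 hM2, ← Nat.mul_comm M2 M1, ← P.ev_lift hM2 hM1]

lemma nu_Abar {x : P.K} (hx : x ∈ P.Abar) (h0 : x ≠ 0) : P.ν x ≤ 0 := by
  obtain ⟨M, hM, p, rfl⟩ := P.exists_ev_of_mem_Abar hx
  have hp : p ≠ 0 := by
    intro h
    rw [h, map_zero] at h0
    exact h0 rfl
  rw [(P.nu_ev hM hp).2]
  have : (0:ℚ) ≤ (p.natDegree : ℚ) / M := by positivity
  linarith

end Aux

end PuiseuxCompletion

open PuiseuxCompletion in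
/-- if `Σ_{n=1}^∞ deg f_n` converges to a finite value, then the
sets `B_{ϖ_n}` of elements whose continued fraction begins with `f₀, …, f_n`
have empty intersection. -/
theorem statement14 {E : Type u} [Field E] (P : PuiseuxCompletion E)
    (f : ℕ → P.K) (hf : ∀ i : ℕ, f i ∈ P.Abar)
    (hdeg : ∀ i : ℕ, 1 ≤ i → 0 < P.deg (f i))
    (hsum : Summable (fun i : ℕ => (P.deg (f (i + 1)) : ℝ))) :
    ¬ ∃ z : P.K, ∀ n : ℕ, P.CFBegins f n z := by
  rintro ⟨z, hz⟩
  classical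
  set Z : ℕ → P.K := fun n => Nat.rec z (fun i x => (x - f i)⁻¹) n with hZdef
  have hZ0 : Z 0 = z := rfl
  have hZs : ∀ n, Z (n + 1) = (Z n - f n)⁻¹ := fun n => rfl
  have key : ∀ n, Z n ≠ f n ∧ 0 < P.ν (Z n - f n) := by
    intro n
    obtain ⟨zs, hzs0, hstep, -, -⟩ := hz (n + 1)
    have hag : ∀ i, i ≤ n → zs i = Z i := by
      intro i
      induction i with
      | zero => intro _; exact hzs0
      | succ i ih =>
          intro hi
          have h1 := ih (Nat.le_of_succ_le hi)
          have h2 := (hstep i (by omega)).2.2.2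
          rw [h2, h1, hZs]
    obtain ⟨-, hν, hne, -⟩ := hstep n (Nat.lt_succ_self n)
    rw [hag n le_rfl] at hν hne
    exact ⟨hne, hν⟩
  set d : ℕ → ℚ := fun n => P.ν (Z n - f n) with hddef
  have hdpos : ∀ n, 0 < d n := fun n => (key n).2
  have hZfne : ∀ n, Z n - f n ≠ 0 := fun n => sub_ne_zero.2 (key n).1
  have hZsne : ∀ n, Z (n + 1) ≠ 0 := fun n => by rw [hZs]; exact inv_ne_zero (hZfne n)
  have hnuZ : ∀ n, P.ν (Z (n + 1)) = -d n := fun n => by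
    rw [hZs, P.nu_inv (hZfne n)]
  have hdeg' : ∀ n, P.deg (f (n + 1)) = d n := by
    intro n
    have hdn1 : P.ν (Z (n + 1) - f (n + 1)) = d (n + 1) := rfl
    have h1 : P.ν (Z (n + 1)) < P.ν (-(Z (n + 1) - f (n + 1))) := by
      rw [P.nu_neg (hZfne (n + 1)), hnuZ n, hdn1]
      linarith [hdpos n, hdpos (n + 1)]
    have h2 := P.nu_add_sharp (hZsne n) (neg_ne_zero.2 (hZfne (n + 1))) h1
    have h3 : Z (n + 1) + -(Z (n + 1) - f (n + 1)) = f (n + 1) := by ring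
    rw [h3] at h2
    show -P.ν (f (n + 1)) = d n
    rw [h2.2, hnuZ n, neg_neg]
  have hsum' : Summable fun n => ((d n : ℚ) : ℝ) := by
    refine hsum.congr fun n => ?_
    rw [hdeg' n]
  set S : ℝ := ∑' n, ((d n : ℚ) : ℝ) with hSdef
  have hpartial : ∀ n, (∑ i ∈ Finset.range (n + 1), ((d i : ℚ) : ℝ)) ≤ S :=
    fun n => Summable.sum_le_tsum _ (fun i _ => by exact_mod_cast (hdpos i).le) hsum'
  obtain ⟨C, hC⟩ := exists_rat_gt (2 * S)
  obtain ⟨g, hgmem, hgcase⟩ := P.dense' z C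
  obtain ⟨G, hG0, hGne, hGnu, hGs⟩ :
      ∃ G : ℕ → P.K,
        G 0 ∈ Subring.closure (Set.range P.emb ∪ Set.range P.mono) ∧
        (∀ n, G n ≠ f n) ∧ (∀ n, P.ν (G n - f n) = d n) ∧
        (∀ n, G (n + 1) = (G n - f n)⁻¹) := by
    by_cases hzg : z = g
    · exact ⟨Z, by rw [hZ0, hzg]; exact hgmem, fun n => (key n).1, fun n => rfl, hZs⟩
    · have hCν : C < P.ν (z - g) := hgcase.resolve_left hzg
      set G : ℕ → P.K := fun n => Nat.rec g (fun i x => (x - f i)⁻¹) n with hGdef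
      have hGs : ∀ n, G (n + 1) = (G n - f n)⁻¹ := fun n => rfl
      have hGfact : ∀ n, Z n ≠ G n →
          (C : ℝ) - 2 * ∑ i ∈ Finset.range n, ((d i : ℚ) : ℝ) ≤ ((P.ν (Z n - G n) : ℚ) : ℝ) →
          (G n - f n ≠ 0 ∧ P.ν (G n - f n) = d n) ∧ d n < P.ν (Z n - G n) := by
        intro n hne hge
        have hZGne : Z n - G n ≠ 0 := sub_ne_zero.2 hne
        have hdn : P.ν (Z n - f n) = d n := rfl
        have hgap : d n < P.ν (Z n - G n) := by
          have h2 := hpartial n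
          rw [Finset.sum_range_succ] at h2
          have hd0 : (0:ℝ) < ((d n : ℚ) : ℝ) := by exact_mod_cast hdpos n
          have hcast : ((d n : ℚ) : ℝ) < ((P.ν (Z n - G n) : ℚ) : ℝ) := by linarith
          exact_mod_cast hcast
        have h1 : P.ν (Z n - f n) < P.ν (G n - Z n) := by
          rw [show G n - Z n = -(Z n - G n) by ring, P.nu_neg hZGne, hdn]
          exact hgap
        have h2 := P.nu_add_sharp (hZfne n) (sub_ne_zero.2 (Ne.symm hne)) h1
        rw [show Z n - f n + (G n - Z n) = G n - f n by ring] at h2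
        exact ⟨⟨h2.1, by rw [h2.2, hdn]⟩, hgap⟩
      have main : ∀ n, Z n ≠ G n ∧
          (C : ℝ) - 2 * ∑ i ∈ Finset.range n, ((d i : ℚ) : ℝ) ≤ ((P.ν (Z n - G n) : ℚ) : ℝ) := by
        intro n
        induction n with
        | zero =>
            refine ⟨hzg, ?_⟩
            simp only [Finset.range_zero, Finset.sum_empty, mul_zero, sub_zero]
            have : (C : ℝ) ≤ ((P.ν (z - g) : ℚ) : ℝ) := by exact_mod_cast hCν.le
            exact this
        | succ n ih =>
            obtain ⟨hne, hge⟩ := ih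
            obtain ⟨⟨hGfne, hGfν⟩, hgap⟩ := hGfact n hne hge
            have hZGne : Z n - G n ≠ 0 := sub_ne_zero.2 hne
            have hdn : P.ν (Z n - f n) = d n := rfl
            have heq : Z (n + 1) - G (n + 1) =
                -(Z n - G n) * ((Z n - f n)⁻¹ * (G n - f n)⁻¹) := by
              rw [hZs, hGs, inv_sub_inv (hZfne n) hGfne, div_eq_mul_inv, mul_inv]
              ring
            have hprodne : -(Z n - G n) * ((Z n - f n)⁻¹ * (G n - f n)⁻¹) ≠ 0 :=
              mul_ne_zero (neg_ne_zero.2 hZGne)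
                (mul_ne_zero (inv_ne_zero (hZfne n)) (inv_ne_zero hGfne))
            have hν : P.ν (Z (n + 1) - G (n + 1)) = P.ν (Z n - G n) - d n - d n := by
              rw [heq, P.ν_mul _ _ (neg_ne_zero.2 hZGne)
                  (mul_ne_zero (inv_ne_zero (hZfne n)) (inv_ne_zero hGfne)),
                P.ν_mul _ _ (inv_ne_zero (hZfne n)) (inv_ne_zero hGfne),
                P.nu_inv (hZfne n), P.nu_inv hGfne, P.nu_neg hZGne, hGfν, hdn]
              ring
            constructor
            · rw [hZs, hGs]
              intro h
              exact hne (sub_left_inj.1 (inv_inj.1 h))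
            · rw [Finset.sum_range_succ, hν]
              push_cast
              linarith
      have hGf : ∀ n, G n - f n ≠ 0 ∧ P.ν (G n - f n) = d n := fun n =>
        (hGfact n (main n).1 (main n).2).1
      exact ⟨G, hgmem, fun n => fun h => (hGf n).1 (by rw [h, sub_self]),
        fun n => (hGf n).2, hGs⟩
  obtain ⟨M, hM, p0, q0, hq0, hrep0⟩ :
      ∃ M, 0 < M ∧ ∃ p q : Polynomial E, q ≠ 0 ∧ G 0 = P.ev M p / P.ev M q := by
    obtain ⟨M, hM, p, q, hq, h⟩ := P.exists_isFrac_of_mem_closure hG0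
    exact ⟨M, hM, p, q, hq, h⟩
  have hMQ : (0:ℚ) < (M:ℚ) := by exact_mod_cast hM
  have step : ∀ n (p q : Polynomial E), q ≠ 0 → G n = P.ev M p / P.ev M q →
      1 / (M:ℚ) ≤ d n ∧ ∃ p' q' : Polynomial E, q' ≠ 0 ∧
        G (n + 1) = P.ev M p' / P.ev M q' := by
    intro n p q hq hrep
    have hevq : P.ev M q ≠ 0 := (P.nu_ev hM hq).1
    set c := p / q with hcdef
    set r := p % q with hrdef
    have hdm : q * c + r = p := EuclideanDomain.div_add_mod p q
    have hsub : P.ev M p - P.ev M c * P.ev M q = P.ev M r := by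
      rw [← map_mul, ← map_sub]
      congr 1
      rw [← hdm]; ring
    have hdiff : G n - P.ev M c = P.ev M r / P.ev M q := by
      have h1 : G n - P.ev M c = (P.ev M p - P.ev M c * P.ev M q) / P.ev M q := by
        rw [hrep]; field_simp
      rw [h1, hsub]
    have hGfne : G n - f n ≠ 0 := sub_ne_zero.2 (hGne n)
    have hfGν : P.ν (f n - G n) = d n := by
      rw [show f n - G n = -(G n - f n) by ring, P.nu_neg hGfne, hGnu n]
    by_cases hr0 : r = 0
    · exfalso
      have hGc : G n = P.ev M c := by
        have h2 := hdiff
        rw [hr0, map_zero, zero_div] at h2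
        exact sub_eq_zero.1 h2
      have hmem : f n - G n ∈ P.Abar := by
        rw [hGc]; exact sub_mem (hf n) (P.ev_mem_Abar c)
      have hne0 : f n - G n ≠ 0 := sub_ne_zero.2 (Ne.symm (hGne n))
      have hle := P.nu_Abar hmem hne0
      rw [hfGν] at hle
      linarith [hdpos n]
    · have hevr := P.nu_ev hM hr0
      have hqdeg : r.natDegree < q.natDegree :=
        Polynomial.natDegree_lt_natDegree hr0 (EuclideanDomain.mod_lt p hq)
      have hνdiff : P.ν (G n - P.ev M c) = ((q.natDegree : ℚ) - r.natDegree) / M := by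
        rw [hdiff, P.nu_div hevr.1 hevq, hevr.2, (P.nu_ev hM hq).2]
        ring
      have hbound : 1 / (M:ℚ) ≤ ((q.natDegree : ℚ) - r.natDegree) / M := by
        rw [div_le_div_iff_of_pos_right hMQ]
        have : (r.natDegree : ℚ) + 1 ≤ q.natDegree := by exact_mod_cast hqdeg
        linarith
      have hδpos : 0 < P.ν (G n - P.ev M c) := by
        rw [hνdiff]
        have : (0:ℚ) < 1 / (M:ℚ) := by positivity
        linarith
      have hdiffne : G n ≠ P.ev M c := by
        intro h
        exact (div_ne_zero hevr.1 hevq) (by rw [← hdiff, h, sub_self])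
      have hfc : f n = P.ev M c := by
        by_contra hne
        have h1 : f n - P.ev M c = (f n - G n) + (G n - P.ev M c) := by ring
        have hterm1 : f n - G n ≠ 0 := sub_ne_zero.2 (Ne.symm (hGne n))
        have hterm2 : G n - P.ev M c ≠ 0 := sub_ne_zero.2 hdiffne
        have hsumne : f n - P.ev M c ≠ 0 := sub_ne_zero.2 hne
        have hν := P.ν_add _ _ hterm1 hterm2 (by rw [← h1]; exact hsumne)
        rw [← h1] at hν
        have hmem : f n - P.ev M c ∈ P.Abar := sub_mem (hf n) (P.ev_mem_Abar c)
        have hle := P.nu_Abar hmem hsumne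
        have hminpos : (0:ℚ) < min (P.ν (f n - G n)) (P.ν (G n - P.ev M c)) := by
          rw [hfGν]
          exact lt_min (hdpos n) hδpos
        linarith
      constructor
      · have hdval : d n = ((q.natDegree : ℚ) - r.natDegree) / M := by
          rw [← hGnu n, hfc, hνdiff]
        rw [hdval]
        exact hbound
      · refine ⟨q, r, hr0, ?_⟩
        rw [hGs n, hfc, hdiff, inv_div]
  have hdlower : ∀ n, 1 / (M:ℚ) ≤ d n := by
    have rep : ∀ n, ∃ p q : Polynomial E, q ≠ 0 ∧ G n = P.ev M p / P.ev M q := by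
      intro n
      induction n with
      | zero => exact ⟨p0, q0, hq0, hrep0⟩
      | succ n ih =>
          obtain ⟨p, q, hq, h⟩ := ih
          exact (step n p q hq h).2
    intro n
    obtain ⟨p, q, hq, h⟩ := rep n
    exact (step n p q hq h).1
  have hMR : (0:ℝ) < 1 / (M:ℝ) := by
    have : (0:ℝ) < (M:ℝ) := by exact_mod_cast hM
    positivity
  obtain ⟨n, hn⟩ := (hsum'.tendsto_atTop_zero.eventually (gt_mem_nhds hMR)).exists
  have h1 : ((1 / (M:ℚ) : ℚ) : ℝ) ≤ ((d n : ℚ) : ℝ) := by exact_mod_cast hdlower n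
  rw [show ((1 / (M:ℚ) : ℚ) : ℝ) = 1 / (M:ℝ) by push_cast; ring] at h1
  linarith
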